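/- Let Q be a Markov kernel on a measurable space (X,𝒳). Assume there exist a function V : X → [1,∞), a function W : X → (0,∞) and a constant b < ∞ such that QV(x) ≤ V(x) e^{−W(x)+b} for all x ∈ X (equivalently log(QV/V) ≤ −W + b). Let n be a positive integer and let F_0,…,F_{n−1} be measurable real-valued functions on X with sup_{x∈X}(|F_k(x)| − W(x)) < ∞ for each k. Then, for every x ∈ X, E_x^Q[ exp( Σ_{k=0}^{n−1} |F_k(X_k)| ) ] ≤ V(x) · exp( bn + Σ_{k=0}^{n−1} sup_{X}(|F_k| − W) ). -/

import Mathlib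

open MeasureTheory ProbabilityTheory
open scoped ENNReal

/-- The law of the Markov chain with kernel `Q` and initial distribution `ν`, realized as a
measure on `ℕ → X`: `pathMeasure Q ν n` carries the joint law of the first `n+1`
coordinates (coordinates beyond `n` are frozen copies). -/
noncomputable def pathMeasure {X : Type*} [MeasurableSpace X] (Q : Kernel X X)
    (ν : Measure X) : ℕ → Measure (ℕ → X)
  | 0 => ν.map (fun x _ => x)
  | n + 1 => (pathMeasure Q ν n).bind
      (fun ω => (Q (ω n)).map (fun x' => Function.update ω (n + 1) x'))

section Aux

variable {X : Type*} [MeasurableSpace X] (Q : Kernel X X) [IsMarkovKernel Q]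

lemma pathMeasure_step_measurable (n : ℕ) :
    Measurable fun ω : ℕ → X => (Q (ω n)).map (fun x' => Function.update ω (n + 1) x') := by
  apply Measure.measurable_of_measurable_coe
  intro s hs
  have hupd : Measurable fun p : (ℕ → X) × X => Function.update p.1 (n + 1) p.2 :=
    measurable_update'
  have ht : MeasurableSet {p : (ℕ → X) × X | Function.update p.1 (n + 1) p.2 ∈ s} :=
    hupd hs
  have hmeas := ProbabilityTheory.Kernel.measurable_kernel_prodMk_left
    (κ := Q.comap (fun ω : ℕ → X => ω n) (measurable_pi_apply n)) ht
  have heq : (fun ω : ℕ → X =>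
      ((Q (ω n)).map (fun x' => Function.update ω (n + 1) x')) s)
      = fun ω : ℕ → X => (Q.comap (fun ω : ℕ → X => ω n) (measurable_pi_apply n)) ω
          (Prod.mk ω ⁻¹' {p : (ℕ → X) × X | Function.update p.1 (n + 1) p.2 ∈ s}) := by
    funext ω
    rw [Measure.map_apply (measurable_update _) hs, Kernel.comap_apply]
    rfl
  rw [heq]
  exact hmeas

lemma lintegral_pathMeasure_succ (ν : Measure X) (n : ℕ) {g : (ℕ → X) → ℝ≥0∞}
    (hg : Measurable g) :
    ∫⁻ ω, g ω ∂(pathMeasure Q ν (n + 1))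
      = ∫⁻ ω, ∫⁻ x', g (Function.update ω (n + 1) x') ∂(Q (ω n)) ∂(pathMeasure Q ν n) := by
  rw [pathMeasure, Measure.lintegral_bind (pathMeasure_step_measurable Q n).aemeasurable hg.aemeasurable]
  congr 1
  funext ω
  rw [lintegral_map hg (measurable_update _)]

lemma lintegral_pathMeasure_zero (x : X) {g : (ℕ → X) → ℝ≥0∞} (hg : Measurable g) :
    ∫⁻ ω, g ω ∂(pathMeasure Q (Measure.dirac x) 0) = g (fun _ => x) := by
  have hc : Measurable fun y : X => (fun _ : ℕ => y) :=
    measurable_pi_lambda _ fun _ => measurable_id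
  rw [pathMeasure, lintegral_map hg hc]
  exact lintegral_dirac' _ (hg.comp hc)

lemma key_drift_bound
    (V : X → ℝ) (hV : ∀ x, 1 ≤ V x) (hVmeas : Measurable V)
    (W : X → ℝ) (hWmeas : Measurable W) (b : ℝ)
    (hdrift : ∀ x, (∫⁻ x', ENNReal.ofReal (V x') ∂(Q x)) ≤
      ENNReal.ofReal (V x * Real.exp (-W x + b)))
    (x : X) (m : ℕ) :
    ∫⁻ ω, ENNReal.ofReal (Real.exp (∑ k ∈ Finset.range m, W (ω k)) * V (ω m))
        ∂(pathMeasure Q (Measure.dirac x) m)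
      ≤ ENNReal.ofReal (V x * Real.exp (b * m)) := by
  have hmeas : ∀ m : ℕ, Measurable fun ω : ℕ → X =>
      ENNReal.ofReal (Real.exp (∑ k ∈ Finset.range m, W (ω k)) * V (ω m)) := by
    intro m
    apply ENNReal.measurable_ofReal.comp
    exact ((Real.measurable_exp.comp
      (Finset.measurable_sum _ fun k _ => hWmeas.comp (measurable_pi_apply k))).mul
      (hVmeas.comp (measurable_pi_apply m)))
  induction m with
  | zero =>
      rw [lintegral_pathMeasure_zero Q x (hmeas 0)]
      simp
  | succ m ih =>
      rw [lintegral_pathMeasure_succ Q _ m (hmeas (m + 1))]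
      have hstep : ∀ ω : ℕ → X,
          (∫⁻ x', ENNReal.ofReal
              (Real.exp (∑ k ∈ Finset.range (m + 1), W (Function.update ω (m + 1) x' k))
                * V (Function.update ω (m + 1) x' (m + 1))) ∂(Q (ω m)))
          ≤ ENNReal.ofReal (Real.exp b) *
              ENNReal.ofReal (Real.exp (∑ k ∈ Finset.range m, W (ω k)) * V (ω m)) := by
        intro ω
        have hsum : ∀ x' : X,
            (∑ k ∈ Finset.range (m + 1), W (Function.update ω (m + 1) x' k))
              = ∑ k ∈ Finset.range (m + 1), W (ω k) := by
          intro x'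
          refine Finset.sum_congr rfl fun k hk => ?_
          rw [Function.update_of_ne (Nat.ne_of_lt (Finset.mem_range.mp hk))]
        calc (∫⁻ x', ENNReal.ofReal
              (Real.exp (∑ k ∈ Finset.range (m + 1), W (Function.update ω (m + 1) x' k))
                * V (Function.update ω (m + 1) x' (m + 1))) ∂(Q (ω m)))
            = ∫⁻ x', ENNReal.ofReal (Real.exp (∑ k ∈ Finset.range (m + 1), W (ω k)))
                * ENNReal.ofReal (V x') ∂(Q (ω m)) := by
              congr 1
              funext x'
              rw [hsum x', Function.update_self,
                ENNReal.ofReal_mul (Real.exp_nonneg _)]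
          _ = ENNReal.ofReal (Real.exp (∑ k ∈ Finset.range (m + 1), W (ω k)))
                * ∫⁻ x', ENNReal.ofReal (V x') ∂(Q (ω m)) :=
              lintegral_const_mul _ (ENNReal.measurable_ofReal.comp hVmeas)
          _ ≤ ENNReal.ofReal (Real.exp (∑ k ∈ Finset.range (m + 1), W (ω k)))
                * ENNReal.ofReal (V (ω m) * Real.exp (-W (ω m) + b)) :=
              mul_le_mul_right (hdrift (ω m)) _
          _ = ENNReal.ofReal (Real.exp b) *
                ENNReal.ofReal (Real.exp (∑ k ∈ Finset.range m, W (ω k)) * V (ω m)) := by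
              rw [← ENNReal.ofReal_mul (Real.exp_nonneg _),
                ← ENNReal.ofReal_mul (Real.exp_nonneg _)]
              congr 1
              rw [Finset.sum_range_succ, Real.exp_add]
              rw [show -W (ω m) + b = b + -W (ω m) by ring, Real.exp_add, Real.exp_neg]
              have hpos : Real.exp (W (ω m)) ≠ 0 := (Real.exp_pos _).ne'
              field_simp
      calc (∫⁻ ω, ∫⁻ x', ENNReal.ofReal
              (Real.exp (∑ k ∈ Finset.range (m + 1), W (Function.update ω (m + 1) x' k))
                * V (Function.update ω (m + 1) x' (m + 1))) ∂(Q (ω m))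
              ∂(pathMeasure Q (Measure.dirac x) m))
          ≤ ∫⁻ ω, ENNReal.ofReal (Real.exp b) *
              ENNReal.ofReal (Real.exp (∑ k ∈ Finset.range m, W (ω k)) * V (ω m))
              ∂(pathMeasure Q (Measure.dirac x) m) := lintegral_mono hstep
        _ = ENNReal.ofReal (Real.exp b) *
              ∫⁻ ω, ENNReal.ofReal (Real.exp (∑ k ∈ Finset.range m, W (ω k)) * V (ω m))
              ∂(pathMeasure Q (Measure.dirac x) m) := lintegral_const_mul _ (hmeas m)
        _ ≤ ENNReal.ofReal (Real.exp b) * ENNReal.ofReal (V x * Real.exp (b * m)) :=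
            mul_le_mul_right ih _
        _ = ENNReal.ofReal (V x * Real.exp (b * (m + 1 : ℕ))) := by
            rw [← ENNReal.ofReal_mul (Real.exp_nonneg _)]
            congr 1
            push_cast
            rw [mul_add, mul_one, Real.exp_add]
            ring

end Aux

/-- under the multiplicative drift condition `QV ≤ V e^{−W+b}` with
`V : X → [1,∞)`, `W : X → (0,∞)`, if `F_0,…,F_{n−1}` are measurable with
`sup_X(|F_k| − W) < ∞`, then for every `x`,
`E_x^Q[exp(Σ_{k<n} |F_k(X_k)|)] ≤ V(x) exp(bn + Σ_{k<n} sup_X(|F_k| − W))`. -/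
theorem forgetting_hmm_stmt10 {X : Type*} [MeasurableSpace X]
    (Q : Kernel X X) [IsMarkovKernel Q]
    (V : X → ℝ) (hV : ∀ x, 1 ≤ V x) (hVmeas : Measurable V)
    (W : X → ℝ) (hW : ∀ x, 0 < W x) (hWmeas : Measurable W)
    (b : ℝ)
    (hdrift : ∀ x, (∫⁻ x', ENNReal.ofReal (V x') ∂(Q x)) ≤
      ENNReal.ofReal (V x * Real.exp (-W x + b)))
    (n : ℕ) (hn : 1 ≤ n)
    (F : ℕ → X → ℝ) (hF : ∀ k, Measurable (F k))
    (hFW : ∀ k, BddAbove (Set.range fun x => |F k x| - W x))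
    (x : X) :
    (∫⁻ ω, ENNReal.ofReal (Real.exp (∑ k ∈ Finset.range n, |F k (ω k)|))
        ∂(pathMeasure Q (Measure.dirac x) (n - 1)))
      ≤ ENNReal.ofReal
          (V x * Real.exp (b * n + ∑ k ∈ Finset.range n, ⨆ x' : X, (|F k x'| - W x'))) := by
  obtain ⟨m, rfl⟩ : ∃ m, n = m + 1 := ⟨n - 1, (Nat.succ_pred_eq_of_pos hn).symm⟩
  simp only [Nat.add_sub_cancel]
  set c : ℕ → ℝ := fun k => ⨆ x' : X, (|F k x'| - W x') with hc
  -- pointwise bound |F k y| ≤ W y + c k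
  have hFle : ∀ k (y : X), |F k y| ≤ W y + c k := by
    intro k y
    have := le_ciSup (hFW k) y
    simp only [hc]
    linarith
  -- pointwise bound exp (W y) ≤ exp b * V y
  have hexpW : ∀ y : X, Real.exp (W y) ≤ Real.exp b * V y := by
    intro y
    have h1 : (1 : ℝ≥0∞) ≤ ∫⁻ x', ENNReal.ofReal (V x') ∂(Q y) := by
      calc (1 : ℝ≥0∞) = ∫⁻ _, 1 ∂(Q y) := by simp
        _ ≤ _ := lintegral_mono fun x' => ENNReal.one_le_ofReal.mpr (hV x')
    have h2 : (1 : ℝ) ≤ V y * Real.exp (-W y + b) :=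
      ENNReal.one_le_ofReal.mp (h1.trans (hdrift y))
    calc Real.exp (W y) = Real.exp (W y) * 1 := (mul_one _).symm
      _ ≤ Real.exp (W y) * (V y * Real.exp (-W y + b)) :=
          mul_le_mul_of_nonneg_left h2 (Real.exp_nonneg _)
      _ = Real.exp b * V y := by
          rw [mul_comm (V y), ← mul_assoc, ← Real.exp_add,
            show W y + (-W y + b) = b by ring]
  -- pointwise bound on the integrand
  have hpt : ∀ ω : ℕ → X,
      ENNReal.ofReal (Real.exp (∑ k ∈ Finset.range (m + 1), |F k (ω k)|))
        ≤ ENNReal.ofReal (Real.exp (∑ k ∈ Finset.range (m + 1), c k) * Real.exp b)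
          * ENNReal.ofReal (Real.exp (∑ k ∈ Finset.range m, W (ω k)) * V (ω m)) := by
    intro ω
    rw [← ENNReal.ofReal_mul (by positivity)]
    apply ENNReal.ofReal_le_ofReal
    calc Real.exp (∑ k ∈ Finset.range (m + 1), |F k (ω k)|)
        ≤ Real.exp (∑ k ∈ Finset.range (m + 1), (W (ω k) + c k)) := by
          apply Real.exp_le_exp.mpr
          exact Finset.sum_le_sum fun k _ => hFle k (ω k)
      _ = Real.exp (∑ k ∈ Finset.range (m + 1), c k)
            * (Real.exp (∑ k ∈ Finset.range m, W (ω k)) * Real.exp (W (ω m))) := by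
          rw [Finset.sum_add_distrib, Real.exp_add, Finset.sum_range_succ, Real.exp_add]
          ring
      _ ≤ Real.exp (∑ k ∈ Finset.range (m + 1), c k)
            * (Real.exp (∑ k ∈ Finset.range m, W (ω k)) * (Real.exp b * V (ω m))) := by
          apply mul_le_mul_of_nonneg_left _ (Real.exp_nonneg _)
          exact mul_le_mul_of_nonneg_left (hexpW (ω m)) (Real.exp_nonneg _)
      _ = Real.exp (∑ k ∈ Finset.range (m + 1), c k) * Real.exp b
            * (Real.exp (∑ k ∈ Finset.range m, W (ω k)) * V (ω m)) := by ring
  have hmeasW : Measurable fun ω : ℕ → X =>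
      ENNReal.ofReal (Real.exp (∑ k ∈ Finset.range m, W (ω k)) * V (ω m)) :=
    ENNReal.measurable_ofReal.comp
      ((Real.measurable_exp.comp
        (Finset.measurable_sum _ fun k _ => hWmeas.comp (measurable_pi_apply k))).mul
        (hVmeas.comp (measurable_pi_apply m)))
  calc (∫⁻ ω, ENNReal.ofReal (Real.exp (∑ k ∈ Finset.range (m + 1), |F k (ω k)|))
          ∂(pathMeasure Q (Measure.dirac x) m))
      ≤ ∫⁻ ω, ENNReal.ofReal (Real.exp (∑ k ∈ Finset.range (m + 1), c k) * Real.exp b)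
          * ENNReal.ofReal (Real.exp (∑ k ∈ Finset.range m, W (ω k)) * V (ω m))
          ∂(pathMeasure Q (Measure.dirac x) m) := lintegral_mono hpt
    _ = ENNReal.ofReal (Real.exp (∑ k ∈ Finset.range (m + 1), c k) * Real.exp b)
          * ∫⁻ ω, ENNReal.ofReal (Real.exp (∑ k ∈ Finset.range m, W (ω k)) * V (ω m))
          ∂(pathMeasure Q (Measure.dirac x) m) := lintegral_const_mul _ hmeasW
    _ ≤ ENNReal.ofReal (Real.exp (∑ k ∈ Finset.range (m + 1), c k) * Real.exp b)
          * ENNReal.ofReal (V x * Real.exp (b * m)) :=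
        mul_le_mul_right (key_drift_bound Q V hV hVmeas W hWmeas b hdrift x m) _
    _ = ENNReal.ofReal
          (V x * Real.exp (b * (m + 1 : ℕ) + ∑ k ∈ Finset.range (m + 1), c k)) := by
        rw [← ENNReal.ofReal_mul (by positivity)]
        congr 1
        rw [Real.exp_add]
        push_cast
        rw [show b * ((m : ℝ) + 1) = b * m + b by ring, Real.exp_add]
        ring
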